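/- Let G be a finite group and let f : G → ℂ be an S-character of G, distinct from the constant function 1, all of whose values are (nonnegative) integers. Let Z_f = {g ∈ G : f(g) = 0} and let M = max_{g∈G} f(g). Then |Z_f| / |G| ≥ 1 / M, i.e., |Z_f| · M ≥ |G|. -/

import Mathlib

open Representation Module CategoryTheory MonoidalCategory

lemma char_sum_eq {G : Type} [Group G] [Fintype G] (V : FDRep ℂ G) :
    ∑ g : G, V.character g
      = (Fintype.card G : ℂ) * (finrank ℂ (invariants V.ρ) : ℂ) := by
  have hc : (Fintype.card G : ℂ) ≠ 0 := by
    exact_mod_cast Fintype.card_ne_zero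
  haveI : Invertible (Fintype.card G : ℂ) := invertibleOfNonzero hc
  have h := FDRep.average_char_eq_finrank_invariants V
  rw [Nat.card_eq_fintype_card] at h
  field_simp at h
  linear_combination h

theorem stmt_7 {G : Type} [Group G] [Fintype G] (f : G → ℂ) (n : G → ℕ)
    (hvals : ∀ g, f g = (n g : ℂ))
    (hvirt : ∃ V W : FDRep ℂ G, ∀ g, f g = V.character g - W.character g)
    (hmean : (1 / (Fintype.card G : ℂ)) * ∑ g, f g = 1)
    (hne : f ≠ fun _ => 1) :
    Fintype.card G ≤ Nat.card {g : G // f g = 0} * Finset.univ.sup n := by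
  classical
  obtain ⟨V, W, hVW⟩ := hvirt
  set c := Fintype.card G with hcdef
  have hcpos : 0 < c := Fintype.card_pos
  have hc0 : (c : ℂ) ≠ 0 := by exact_mod_cast hcpos.ne'
  -- first moment
  have hS1 : ∑ g : G, n g = c := by
    have h1 : (∑ g : G, f g) = (c : ℂ) := by
      field_simp at hmean
      linear_combination hmean
    have h2 : ((∑ g : G, n g : ℕ) : ℂ) = (c : ℂ) := by
      rw [Nat.cast_sum, ← h1]
      exact Finset.sum_congr rfl fun g _ => (hvals g).symm
    exact_mod_cast h2
  -- second moment is divisible by c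
  set S2 : ℕ := ∑ g : G, (n g) ^ 2 with hS2def
  have hdvd : ∃ z : ℤ, (S2 : ℤ) = (c : ℤ) * z := by
    set d1 : ℕ := finrank ℂ (invariants (V ⊗ V).ρ)
    set d2 : ℕ := finrank ℂ (invariants (W ⊗ W).ρ)
    set d3 : ℕ := finrank ℂ (invariants (V ⊗ W).ρ)
    have key : (S2 : ℂ) = (c : ℂ) * ((d1 : ℂ) + d2 - 2 * d3) := by
      have e1 : ∀ g : G, ((n g : ℂ)) ^ 2
          = (V ⊗ V).character g + (W ⊗ W).character g - 2 * (V ⊗ W).character g := by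
        intro g
        have hv := hVW g
        rw [hvals g] at hv
        have t1 : (V ⊗ V).character g = V.character g * V.character g := by
          rw [FDRep.char_tensor]; rfl
        have t2 : (W ⊗ W).character g = W.character g * W.character g := by
          rw [FDRep.char_tensor]; rfl
        have t3 : (V ⊗ W).character g = V.character g * W.character g := by
          rw [FDRep.char_tensor]; rfl
        rw [t1, t2, t3]
        linear_combination ((n g : ℂ) + V.character g - W.character g) * hv
      have hcast : (S2 : ℂ) = ∑ g : G, ((n g : ℂ)) ^ 2 := by
        rw [hS2def]; push_cast; rfl
      rw [hcast, Finset.sum_congr rfl fun g _ => e1 g]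
      rw [Finset.sum_sub_distrib, Finset.sum_add_distrib, ← Finset.mul_sum,
        char_sum_eq, char_sum_eq, char_sum_eq]
      ring
    refine ⟨(d1 : ℤ) + d2 - 2 * d3, ?_⟩
    have h3 : ((S2 : ℤ) : ℂ) = (((c : ℤ) * ((d1 : ℤ) + d2 - 2 * d3) : ℤ) : ℂ) := by
      push_cast
      push_cast at key
      linear_combination key
    exact_mod_cast h3
  -- S2 ≥ c + 1
  have hS2big : (c : ℤ) + 1 ≤ (S2 : ℤ) := by
    obtain ⟨g0, hg0⟩ : ∃ g : G, n g ≠ 1 := by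
      by_contra h
      push_neg at h
      exact hne (funext fun g => by rw [hvals g, h g, Nat.cast_one])
    have hsum : ∑ g : G, ((n g : ℤ) - 1) ^ 2 = (S2 : ℤ) - c := by
      have h1 : (∑ g : G, (n g : ℤ)) = (c : ℤ) := by exact_mod_cast hS1
      have h2 : (∑ g : G, (n g : ℤ) ^ 2) = (S2 : ℤ) := by rw [hS2def]; push_cast; rfl
      calc ∑ g : G, ((n g : ℤ) - 1) ^ 2
          = ∑ g : G, ((n g : ℤ) ^ 2 - 2 * (n g : ℤ) + 1) :=
            Finset.sum_congr rfl fun g _ => by ring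
        _ = (∑ g : G, (n g : ℤ) ^ 2) - 2 * (∑ g : G, (n g : ℤ)) + c := by
            rw [Finset.sum_add_distrib, Finset.sum_sub_distrib, Finset.mul_sum]
            simp [hcdef]
        _ = (S2 : ℤ) - c := by rw [h1, h2]; ring
    have hterm : (1 : ℤ) ≤ ((n g0 : ℤ) - 1) ^ 2 := by
      have hne0 : (n g0 : ℤ) - 1 ≠ 0 := by
        intro h; apply hg0; omega
      have habs := Int.one_le_abs hne0
      nlinarith [sq_abs ((n g0 : ℤ) - 1)]
    have hle : (1 : ℤ) ≤ ∑ g : G, ((n g : ℤ) - 1) ^ 2 :=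
      le_trans hterm (Finset.single_le_sum (f := fun g => ((n g : ℤ) - 1) ^ 2)
        (fun g _ => sq_nonneg _) (Finset.mem_univ g0))
    linarith [hsum ▸ hle]
  -- hence S2 ≥ 2c
  have hS2two : 2 * (c : ℤ) ≤ (S2 : ℤ) := by
    obtain ⟨z, hz⟩ := hdvd
    have hz2 : 2 ≤ z := by nlinarith
    nlinarith
  -- counting
  set M := Finset.univ.sup n with hMdef
  set Z := Finset.univ.filter (fun g => n g = 0) with hZdef
  have hpt : ∀ g : G, ((n g : ℤ)) ^ 2 + M ≤ (M + 1) * (n g : ℤ)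
      + M * (if n g = 0 then 1 else 0) := by
    intro g
    by_cases h : n g = 0
    · simp [h]
    · have h1 : 1 ≤ (n g : ℤ) := by omega
      have h2 : (n g : ℤ) ≤ M := by exact_mod_cast Finset.le_sup (Finset.mem_univ g)
      simp only [h, if_neg, if_false]
      nlinarith
  have hsum2 : (S2 : ℤ) + c * M ≤ (M + 1) * c + M * Z.card := by
    have := Finset.sum_le_sum (fun g (_ : g ∈ Finset.univ) => hpt g)
    have hl : ∑ g : G, (((n g : ℤ)) ^ 2 + M) = (S2 : ℤ) + c * M := by
      rw [Finset.sum_add_distrib]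
      have h2 : (∑ g : G, (n g : ℤ) ^ 2) = (S2 : ℤ) := by rw [hS2def]; push_cast; rfl
      simp [h2, hcdef, mul_comm]
    have hr : ∑ g : G, ((M + 1) * (n g : ℤ) + M * (if n g = 0 then 1 else 0))
        = (M + 1) * c + M * Z.card := by
      rw [Finset.sum_add_distrib, ← Finset.mul_sum, ← Finset.mul_sum]
      have h1 : (∑ g : G, (n g : ℤ)) = (c : ℤ) := by exact_mod_cast hS1
      have h4 : (∑ g : G, (if n g = 0 then (1 : ℤ) else 0)) = (Z.card : ℤ) := by
        rw [hZdef]; simp [Finset.sum_boole]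
      rw [h1, h4]
    rw [hl, hr] at this
    exact this
  have hfinal : (c : ℤ) ≤ (Z.card : ℤ) * M := by nlinarith
  have hcard : Nat.card {g : G // f g = 0} = Z.card := by
    rw [Nat.card_eq_fintype_card, Fintype.card_subtype, hZdef]
    apply Finset.card_bij (fun g _ => g) <;> intros <;>
      simp_all [hvals, Nat.cast_eq_zero]
  rw [hcard]
  exact_mod_cast hfinal
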